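/- Let {W_i}_{i=1}^N be a tight fusion frame for ℝ^M with Σ_{ℓ=1}^N P_ℓ = A·I in which every subspace has dimension m, and let σ_x, σ_n > 0. If two distinct subspaces W_i and W_j are erased, the extra MSE of the no-erasure LMMSE estimator equals 2 α² (σ_x² + σ_n²) m + 2 α² σ_x² tr[P_i P_j] = 2 α² (σ_x² + σ_n²) m + 2 α² σ_x² (m − d_c(W_i,W_j)²), where α = σ_x²/(A σ_x² + σ_n²). In particular, for fixed m the extra MSE is a strictly decreasing function of the chordal distance d_c(W_i, W_j). -/
import Mathlib


open Matrix BigOperators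

/-- The Frobenius norm of a real square matrix. -/
noncomputable def frobeniusNorm {M : ℕ} (X : Matrix (Fin M) (Fin M) ℝ) : ℝ :=
  Real.sqrt (Matrix.trace (Xᵀ * X))

/-- The chordal distance between two subspaces of `ℝ^M`, expressed in terms of their
orthogonal projection matrices: `d_c = (1/√2) ‖Q_V − Q_W‖_F`. -/
noncomputable def chordalDist {M : ℕ} (Q₁ Q₂ : Matrix (Fin M) (Fin M) ℝ) : ℝ :=
  (1 / Real.sqrt 2) * frobeniusNorm (Q₁ - Q₂)

lemma trace_mulVecLin' {M : ℕ} (A : Matrix (Fin M) (Fin M) ℝ) :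
    LinearMap.trace ℝ (Fin M → ℝ) A.mulVecLin = A.trace := by
  rw [LinearMap.trace_eq_matrix_trace ℝ (Pi.basisFun ℝ (Fin M))]
  rw [LinearMap.toMatrix_eq_toMatrix', ← Matrix.toLin'_apply', LinearMap.toMatrix'_toLin']

lemma trace_proj' {M : ℕ} (P : Matrix (Fin M) (Fin M) ℝ) (h : P * P = P)
    (Wi : Submodule ℝ (Fin M → ℝ)) (hr : LinearMap.range P.mulVecLin = Wi) :
    P.trace = (Module.finrank ℝ Wi : ℝ) := by
  have hproj : LinearMap.IsProj Wi P.mulVecLin := by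
    constructor
    · intro x; rw [← hr]; exact ⟨x, rfl⟩
    · intro x hx
      rw [← hr] at hx
      obtain ⟨y, rfl⟩ := hx
      have : (P * P).mulVecLin y = P.mulVecLin (P.mulVecLin y) := by
        simp [Matrix.mulVecLin_mul]
      rw [← this, h]
  rw [← trace_mulVecLin', hproj.trace]

lemma trace_transpose_mul_self_nonneg {M : ℕ} (X : Matrix (Fin M) (Fin M) ℝ) :
    0 ≤ Matrix.trace (Xᵀ * X) := by
  simp only [Matrix.trace, Matrix.diag, Matrix.mul_apply, Matrix.transpose_apply]
  apply Finset.sum_nonneg; intro a _; apply Finset.sum_nonneg; intro b _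
  exact mul_self_nonneg _

/-- For a tight fusion frame `∑ₗ Pₗ = A • I` of `m`-dimensional
subspaces and `σₓ, σₙ > 0`: if two distinct subspaces `W i`, `W j` are erased, the extra
MSE of the no-erasure LMMSE estimator equals
`2α²(σₓ²+σₙ²)m + 2α²σₓ² tr[Pᵢ Pⱼ] = 2α²(σₓ²+σₙ²)m + 2α²σₓ²(m − d_c(Wᵢ,Wⱼ)²)`,
with `α = σₓ²/(Aσₓ²+σₙ²)`; in particular, for fixed `m` the extra MSE is a strictly
decreasing function of the chordal distance. -/
theorem two_erasure_mse {M N : ℕ} (A : ℝ) (hA : 0 < A)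
    (σx σn : ℝ) (hσx : 0 < σx) (hσn : 0 < σn)
    (W : Fin N → Submodule ℝ (Fin M → ℝ))
    (P : Fin N → Matrix (Fin M) (Fin M) ℝ)
    (hP : ∀ i, (P i).IsSymm ∧ P i * P i = P i ∧
      LinearMap.range (P i).mulVecLin = W i)
    (htight : ∑ ℓ, P ℓ = A • (1 : Matrix (Fin M) (Fin M) ℝ))
    (m : ℕ) (hdim : ∀ i, Module.finrank ℝ (W i) = m)
    (i j : Fin N) (hij : i ≠ j)
    (α : ℝ) (hα : α = σx ^ 2 / (A * σx ^ 2 + σn ^ 2)) :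
    α ^ 2 * Matrix.trace
        (σx ^ 2 • ((P i + P j) * (P i + P j)) + σn ^ 2 • (P i + P j)) =
      2 * α ^ 2 * (σx ^ 2 + σn ^ 2) * (m : ℝ) +
        2 * α ^ 2 * σx ^ 2 * Matrix.trace (P i * P j) ∧
    α ^ 2 * Matrix.trace
        (σx ^ 2 • ((P i + P j) * (P i + P j)) + σn ^ 2 • (P i + P j)) =
      2 * α ^ 2 * (σx ^ 2 + σn ^ 2) * (m : ℝ) +
        2 * α ^ 2 * σx ^ 2 * ((m : ℝ) - chordalDist (P i) (P j) ^ 2) ∧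
    StrictAntiOn
      (fun d : ℝ => 2 * α ^ 2 * (σx ^ 2 + σn ^ 2) * (m : ℝ) +
        2 * α ^ 2 * σx ^ 2 * ((m : ℝ) - d ^ 2))
      (Set.Ici 0) := by
  obtain ⟨hsi, hii, hri⟩ := hP i
  obtain ⟨hsj, hjj, hrj⟩ := hP j
  have htrPi : (P i).trace = (m : ℝ) := by
    rw [trace_proj' (P i) hii (W i) hri, hdim i]
  have htrPj : (P j).trace = (m : ℝ) := by
    rw [trace_proj' (P j) hjj (W j) hrj, hdim j]
  have htrji : (P j * P i).trace = (P i * P j).trace := Matrix.trace_mul_comm _ _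
  -- main trace computation
  have hmain : Matrix.trace
      (σx ^ 2 • ((P i + P j) * (P i + P j)) + σn ^ 2 • (P i + P j)) =
      2 * (σx ^ 2 + σn ^ 2) * (m : ℝ) + 2 * σx ^ 2 * Matrix.trace (P i * P j) := by
    have hexp : (P i + P j) * (P i + P j) =
        P i + P i * P j + P j * P i + P j := by
      rw [add_mul, mul_add, mul_add, hii, hjj]; abel
    rw [hexp]
    simp only [Matrix.trace_add, Matrix.trace_smul, smul_eq_mul, htrPi, htrPj, htrji]
    ring
  -- chordal distance
  have hchord : chordalDist (P i) (P j) ^ 2 = (m : ℝ) - Matrix.trace (P i * P j) := by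
    have ht : Matrix.trace ((P i - P j)ᵀ * (P i - P j)) =
        2 * ((m : ℝ) - Matrix.trace (P i * P j)) := by
      have htr : (P i - P j)ᵀ = P i - P j := by
        rw [Matrix.transpose_sub, hsi.eq, hsj.eq]
      rw [htr, Matrix.sub_mul, Matrix.mul_sub, Matrix.mul_sub, hii, hjj]
      simp only [Matrix.trace_sub, htrPi, htrPj, htrji]
      ring
    have hnn : (0:ℝ) ≤ Matrix.trace ((P i - P j)ᵀ * (P i - P j)) :=
      trace_transpose_mul_self_nonneg _
    rw [chordalDist, frobeniusNorm, mul_pow, Real.sq_sqrt hnn, ht]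
    rw [div_pow, one_pow, Real.sq_sqrt (by norm_num : (0:ℝ) ≤ 2)]
    ring
  refine ⟨by rw [hmain]; ring, by rw [hmain, hchord]; ring, ?_⟩
  -- strict antitonicity
  have hαpos : 0 < α := by
    rw [hα]; positivity
  have hc : 0 < 2 * α ^ 2 * σx ^ 2 := by positivity
  intro a ha b hb hab
  simp only
  have h2 : a ^ 2 < b ^ 2 := by
    apply pow_lt_pow_left₀ hab ha
    norm_num
  nlinarith [hc]
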